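/- Fix n ∈ ℕ and write [n] = {1,…,n}. Let N, L ⊆ [n] be disjoint, let S = [n] ∖ (N ∪ L), and let K be a subset with N ⊆ K ⊆ [n] ∖ L; set K̄ = K Δ S. For disjoint finite sets A, B of naturals let inv(A,B) = |{(a,b) ∈ A × B : a > b}|, for i ∈ ℕ and a finite set A let ℓ(i,A) = |{a ∈ A : a < i}|, and define [K,K̄] = |[n] ∖ K̄|·(|N| + |L|) + C(|[n] ∖ K̄|, 2) + inv([n] ∖ K̄, K̄) + n·|K̄| + inv(L, K ∖ N) + C(|N|, 2) + inv(N, K ∖ N). Then for every i ∈ S, [K,K̄] + [K Δ {i}, (K Δ {i}) Δ S] + ℓ(i, K Δ {i}) + ℓ(i, K̄ Δ {i}) + n is even, where [K Δ {i}, (K Δ {i}) Δ S] is given by the same formula with K replaced by K Δ {i} (note (K Δ {i}) Δ S = K̄ Δ {i}). -/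
import Mathlib


open scoped symmDiff

/-- `inv(A,B)`: the number of pairs `(a,b) ∈ A × B` with `a > b`. -/
def invCount {n : ℕ} (A B : Finset (Fin n)) : ℕ :=
  ((A ×ˢ B).filter (fun p => p.2 < p.1)).card

/-- `ℓ(i,A)`: the number of elements of `A` smaller than `i`. -/
def low {n : ℕ} (i : Fin n) (A : Finset (Fin n)) : ℕ :=
  (A.filter (fun a => a < i)).card

/-- The sign exponent `[K, K̄]` attached to the ordered antipode `(K, K Δ S)` of the
subcube `Q_{N,L}`, where `S = [n] ∖ (N ∪ L)` and complements are taken in `[n]`. -/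
def signExp {n : ℕ} (N L K : Finset (Fin n)) : ℕ :=
  (K ∆ (N ∪ L)ᶜ)ᶜ.card * (N.card + L.card)
    + Nat.choose (K ∆ (N ∪ L)ᶜ)ᶜ.card 2
    + invCount (K ∆ (N ∪ L)ᶜ)ᶜ (K ∆ (N ∪ L)ᶜ)
    + n * (K ∆ (N ∪ L)ᶜ).card
    + invCount L (K \ N)
    + Nat.choose N.card 2
    + invCount N (K \ N)

def high {n : ℕ} (i : Fin n) (A : Finset (Fin n)) : ℕ :=
  (A.filter (fun a => i < a)).card

lemma invCount_eq_sum {n : ℕ} (A B : Finset (Fin n)) :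
    invCount A B = ∑ a ∈ A, low a B := by
  unfold invCount low
  rw [Finset.card_filter, Finset.sum_product]
  refine Finset.sum_congr rfl fun a _ => ?_
  rw [Finset.card_filter]

lemma invCount_insert_left {n : ℕ} {A : Finset (Fin n)} (B : Finset (Fin n)) {i : Fin n}
    (h : i ∉ A) : invCount (insert i A) B = invCount A B + low i B := by
  rw [invCount_eq_sum, invCount_eq_sum, Finset.sum_insert h, add_comm]

lemma invCount_insert_right {n : ℕ} (A : Finset (Fin n)) {B : Finset (Fin n)} {i : Fin n}
    (h : i ∉ B) : invCount A (insert i B) = invCount A B + high i A := by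
  rw [invCount_eq_sum, invCount_eq_sum]
  have : ∀ a ∈ A, low a (insert i B) = low a B + (if i < a then 1 else 0) := by
    intro a _
    unfold low
    rw [Finset.filter_insert]
    split
    · rw [Finset.card_insert_of_notMem (fun hm => h (Finset.mem_of_mem_filter _ hm))]
    · rw [add_zero]
  rw [Finset.sum_congr rfl this, Finset.sum_add_distrib]
  unfold high
  rw [Finset.card_filter]

lemma low_add_high {n : ℕ} (i : Fin n) (X : Finset (Fin n)) :
    low i X + high i X = (X.erase i).card := by
  unfold low high
  rw [← Finset.card_union_of_disjoint]
  · congr 1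
    ext a
    simp only [Finset.mem_union, Finset.mem_filter, Finset.mem_erase]
    constructor
    · rintro (⟨h1, h2⟩ | ⟨h1, h2⟩) <;> exact ⟨by omega, h1⟩
    · rintro ⟨h1, h2⟩
      rcases lt_or_gt_of_ne h1 with h | h
      · exact Or.inl ⟨h2, h⟩
      · exact Or.inr ⟨h2, h⟩
  · rw [Finset.disjoint_filter]
    intro a _ h1 h2
    exact absurd (h1.trans h2) (lt_irrefl a)

lemma low_compl {n : ℕ} (i : Fin n) (X : Finset (Fin n)) :
    low i X + low i Xᶜ = low i Finset.univ := by
  unfold low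
  rw [← Finset.card_union_of_disjoint]
  · congr 1
    ext a
    simp only [Finset.mem_union, Finset.mem_filter, Finset.mem_compl, Finset.mem_univ, true_and]
    by_cases h : a ∈ X <;> simp [h] <;> tauto
  · rw [Finset.disjoint_left]
    intro a ha hm
    exact (Finset.mem_compl.mp (Finset.mem_of_mem_filter _ hm)) (Finset.mem_of_mem_filter _ ha)

lemma low_union_disjoint {n : ℕ} (i : Fin n) {X Y : Finset (Fin n)} (h : Disjoint X Y) :
    low i (X ∪ Y) = low i X + low i Y := by
  unfold low
  rw [Finset.filter_union, Finset.card_union_of_disjoint (h.mono (Finset.filter_subset _ _) (Finset.filter_subset _ _))]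

lemma low_symmDiff_parity {n : ℕ} (i : Fin n) (X Y : Finset (Fin n)) :
    low i (X ∆ Y) + 2 * ((X.filter (fun a => a < i)) ∩ (Y.filter (fun a => a < i))).card
      = low i X + low i Y := by
  unfold low
  have hf : (X ∆ Y).filter (fun a => a < i) = (X.filter (fun a => a < i)) ∆ (Y.filter (fun a => a < i)) := by
    ext a
    simp only [Finset.mem_filter, Finset.mem_symmDiff]
    tauto
  rw [hf]
  have := Finset.card_inter_add_card_union (X.filter (fun a => a < i)) (Y.filter (fun a => a < i))
  have h2 : ((X.filter (fun a => a < i)) ∆ (Y.filter (fun a => a < i))).card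
      + ((X.filter (fun a => a < i)) ∩ (Y.filter (fun a => a < i))).card
      = ((X.filter (fun a => a < i)) ∪ (Y.filter (fun a => a < i))).card := by
    rw [← Finset.card_union_of_disjoint]
    · congr 1
      ext a
      simp only [Finset.mem_union, Finset.mem_symmDiff, Finset.mem_inter]
      tauto
    · rw [Finset.disjoint_left]
      intro a ha hm
      simp only [Finset.mem_symmDiff] at ha
      simp only [Finset.mem_inter] at hm
      tauto
  omega

lemma low_symmDiff_singleton {n : ℕ} (i : Fin n) (A : Finset (Fin n)) :
    low i (A ∆ {i}) = low i A := by
  unfold low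
  congr 1
  ext a
  simp only [Finset.mem_filter, Finset.mem_symmDiff, Finset.mem_singleton]
  constructor
  · rintro ⟨h1, h2⟩; refine ⟨?_, h2⟩; rcases h1 with ⟨h, _⟩ | ⟨h, _⟩
    · exact h
    · exact absurd (h ▸ h2) (lt_irrefl i)
  · rintro ⟨h1, h2⟩
    exact ⟨Or.inl ⟨h1, fun h => absurd (h ▸ h2) (lt_irrefl i)⟩, h2⟩

lemma high_erase {n : ℕ} (i : Fin n) (A : Finset (Fin n)) :
    high i (A.erase i) = high i A := by
  unfold high
  congr 1
  ext a
  simp only [Finset.mem_filter, Finset.mem_erase]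
  constructor
  · rintro ⟨⟨_, h⟩, h2⟩; exact ⟨h, h2⟩
  · rintro ⟨h1, h2⟩; exact ⟨⟨fun h => absurd (h ▸ h2) (lt_irrefl i), h1⟩, h2⟩

lemma symmDiff_singleton_of_mem {n : ℕ} {A : Finset (Fin n)} {i : Fin n} (h : i ∈ A) :
    A ∆ {i} = A.erase i := by
  ext a
  simp only [Finset.mem_symmDiff, Finset.mem_singleton, Finset.mem_erase]
  by_cases ha : a = i <;> simp [ha, h] <;> tauto

lemma symmDiff_singleton_of_not_mem {n : ℕ} {A : Finset (Fin n)} {i : Fin n} (h : i ∉ A) :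
    A ∆ {i} = insert i A := by
  ext a
  simp only [Finset.mem_symmDiff, Finset.mem_singleton, Finset.mem_insert]
  by_cases ha : a = i <;> simp [ha, h] <;> tauto

lemma invCount_erase_left {n : ℕ} {A : Finset (Fin n)} (B : Finset (Fin n)) {i : Fin n}
    (h : i ∈ A) : invCount A B = invCount (A.erase i) B + low i B := by
  conv_lhs => rw [← Finset.insert_erase h]
  rw [invCount_insert_left _ (Finset.notMem_erase i A)]

lemma invCount_erase_right {n : ℕ} (A : Finset (Fin n)) {B : Finset (Fin n)} {i : Fin n}
    (h : i ∈ B) : invCount A B = invCount A (B.erase i) + high i A := by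
  conv_lhs => rw [← Finset.insert_erase h]
  rw [invCount_insert_right _ (Finset.notMem_erase i B)]

lemma low_erase {n : ℕ} (i : Fin n) (A : Finset (Fin n)) :
    low i (A.erase i) = low i A := by
  unfold low
  congr 1
  ext a
  simp only [Finset.mem_filter, Finset.mem_erase]
  constructor
  · rintro ⟨⟨_, h⟩, h2⟩; exact ⟨h, h2⟩
  · rintro ⟨h1, h2⟩; exact ⟨⟨fun h => absurd (h ▸ h2) (lt_irrefl i), h1⟩, h2⟩

/-- For every `i ∈ S`, the quantity
`[K,K̄] + [K Δ {i}, K̄ Δ {i}] + ℓ(i, K Δ {i}) + ℓ(i, K̄ Δ {i}) + n` is even. -/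
theorem signExp_antipode_parity {n : ℕ} (N L K : Finset (Fin n))
    (hNL : Disjoint N L) (hNK : N ⊆ K) (hKL : Disjoint K L) :
    ∀ i ∈ ((N ∪ L)ᶜ : Finset (Fin n)),
      Even (signExp N L K + signExp N L (K ∆ {i})
        + low i (K ∆ {i}) + low i ((K ∆ (N ∪ L)ᶜ) ∆ {i}) + n) := by
  intro i hi
  set S : Finset (Fin n) := (N ∪ L)ᶜ with hS
  set M : Finset (Fin n) := K ∆ S with hM
  have hiS : i ∈ S := hi
  have hiNL : i ∉ N ∪ L := Finset.mem_compl.mp hi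
  have hiN : i ∉ N := fun h => hiNL (Finset.mem_union_left _ h)
  have hiL : i ∉ L := fun h => hiNL (Finset.mem_union_right _ h)
  have e1 : signExp N L K =
      Mᶜ.card * (N.card + L.card) + Nat.choose Mᶜ.card 2 + invCount Mᶜ M
        + n * M.card + invCount L (K \ N) + Nat.choose N.card 2
        + invCount N (K \ N) := by
    rw [signExp, ← hS, ← hM]
  -- shared parity facts
  have hClowM : low i M + low i Mᶜ = low i Finset.univ := low_compl i M
  have hClowS : low i S + low i Sᶜ = low i Finset.univ := low_compl i S
  have hSc : Sᶜ = N ∪ L := by rw [hS, compl_compl]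
  have hlowNL : low i (N ∪ L) = low i N + low i L := low_union_disjoint i hNL
  rw [hSc] at hClowS
  rw [hlowNL] at hClowS
  have hlowSym := low_symmDiff_parity i K S
  rw [← hM] at hlowSym
  have hPL : low i L + high i L = L.card := by
    rw [low_add_high, Finset.erase_eq_of_notMem hiL]
  have hPN : low i N + high i N = N.card := by
    rw [low_add_high, Finset.erase_eq_of_notMem hiN]
  have hlow1 : low i (K ∆ {i}) = low i K := low_symmDiff_singleton i K
  have hlow2 : low i (M ∆ {i}) = low i M := low_symmDiff_singleton i M
  rw [Nat.even_iff]
  by_cases hiK : i ∈ K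
  · -- i ∈ K : flipping removes i from K, adds it to M
    have hiM : i ∉ M := by
      rw [hM]; simp [Finset.mem_symmDiff, hiK, hiS]
    have hiMc : i ∈ Mᶜ := Finset.mem_compl.mpr hiM
    have hiKN : i ∈ K \ N := Finset.mem_sdiff.mpr ⟨hiK, hiN⟩
    have hK' : K ∆ {i} = K.erase i := symmDiff_singleton_of_mem hiK
    have hM' : (K ∆ {i}) ∆ S = insert i M := by
      rw [symmDiff_right_comm, ← hM, symmDiff_singleton_of_not_mem hiM]
    have hKdN : (K ∆ {i}) \ N = (K \ N).erase i := by
      rw [hK']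
      ext a
      simp only [Finset.mem_sdiff, Finset.mem_erase]
      tauto
    have e2 : signExp N L (K ∆ {i}) =
        (Mᶜ.erase i).card * (N.card + L.card) + Nat.choose (Mᶜ.erase i).card 2
          + invCount (Mᶜ.erase i) (insert i M) + n * (insert i M).card
          + invCount L ((K \ N).erase i) + Nat.choose N.card 2
          + invCount N ((K \ N).erase i) := by
      rw [signExp, ← hS, hKdN, hM', Finset.compl_insert]
    have hca : Mᶜ.card = (Mᶜ.erase i).card + 1 := by
      have h1 := Finset.card_erase_of_mem hiMc
      have h2 := Finset.card_pos.mpr ⟨i, hiMc⟩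
      omega
    have hcb : (insert i M).card = M.card + 1 := Finset.card_insert_of_notMem hiM
    have hmul : Mᶜ.card * (N.card + L.card)
        = (Mᶜ.erase i).card * (N.card + L.card) + (N.card + L.card) := by
      rw [hca, add_mul, one_mul]
    have hch : Nat.choose Mᶜ.card 2
        = Nat.choose (Mᶜ.erase i).card 2 + (Mᶜ.erase i).card := by
      rw [hca, Nat.choose_succ_succ, Nat.choose_one_right, add_comm]
    have hmn : n * (insert i M).card = n * M.card + n := by
      rw [hcb, mul_add, mul_one]
    have hinvMc : invCount Mᶜ M = invCount (Mᶜ.erase i) M + low i M :=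
      invCount_erase_left _ hiMc
    have hinvM' : invCount (Mᶜ.erase i) (insert i M)
        = invCount (Mᶜ.erase i) M + high i Mᶜ := by
      rw [invCount_insert_right _ hiM, high_erase]
    have hinvL : invCount L (K \ N) = invCount L ((K \ N).erase i) + high i L :=
      invCount_erase_right _ hiKN
    have hinvN : invCount N (K \ N) = invCount N ((K \ N).erase i) + high i N :=
      invCount_erase_right _ hiKN
    have hPMc : low i Mᶜ + high i Mᶜ = (Mᶜ.erase i).card := low_add_high i Mᶜ
    rw [e1, e2, hlow1, hlow2, hmul, hch, hmn, hinvMc, hinvM', hinvL, hinvN]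
    omega
  · -- i ∉ K : flipping adds i to K, removes it from M
    have hiM : i ∈ M := by
      rw [hM]; simp [Finset.mem_symmDiff, hiK, hiS]
    have hiMc : i ∉ Mᶜ := by simp [Finset.mem_compl, hiM]
    have hiKN : i ∉ K \ N := fun h => hiK (Finset.mem_sdiff.mp h).1
    have hK' : K ∆ {i} = insert i K := symmDiff_singleton_of_not_mem hiK
    have hM' : (K ∆ {i}) ∆ S = M.erase i := by
      rw [symmDiff_right_comm, ← hM, symmDiff_singleton_of_mem hiM]
    have hKdN : (K ∆ {i}) \ N = insert i (K \ N) := by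
      rw [hK']
      ext a
      simp only [Finset.mem_sdiff, Finset.mem_insert]
      constructor
      · rintro ⟨h1 | h1, h2⟩
        · exact Or.inl h1
        · exact Or.inr ⟨h1, h2⟩
      · rintro (h1 | ⟨h1, h2⟩)
        · exact ⟨Or.inl h1, h1 ▸ hiN⟩
        · exact ⟨Or.inr h1, h2⟩
    have e2 : signExp N L (K ∆ {i}) =
        (insert i Mᶜ).card * (N.card + L.card) + Nat.choose (insert i Mᶜ).card 2
          + invCount (insert i Mᶜ) (M.erase i) + n * (M.erase i).card
          + invCount L (insert i (K \ N)) + Nat.choose N.card 2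
          + invCount N (insert i (K \ N)) := by
      rw [signExp, ← hS, hKdN, hM', Finset.compl_erase]
    have hca : (insert i Mᶜ).card = Mᶜ.card + 1 := Finset.card_insert_of_notMem hiMc
    have hcb : M.card = (M.erase i).card + 1 := by
      have h1 := Finset.card_erase_of_mem hiM
      have h2 := Finset.card_pos.mpr ⟨i, hiM⟩
      omega
    have hmul : (insert i Mᶜ).card * (N.card + L.card)
        = Mᶜ.card * (N.card + L.card) + (N.card + L.card) := by
      rw [hca, add_mul, one_mul]
    have hch : Nat.choose (insert i Mᶜ).card 2
        = Nat.choose Mᶜ.card 2 + Mᶜ.card := by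
      rw [hca, Nat.choose_succ_succ, Nat.choose_one_right, add_comm]
    have hmn : n * M.card = n * (M.erase i).card + n := by
      rw [hcb, mul_add, mul_one]
    have hinvA : invCount (insert i Mᶜ) (M.erase i)
        = invCount Mᶜ (M.erase i) + low i M := by
      rw [invCount_insert_left _ hiMc, low_erase]
    have hinvB : invCount Mᶜ M = invCount Mᶜ (M.erase i) + high i Mᶜ :=
      invCount_erase_right _ hiM
    have hinvL : invCount L (insert i (K \ N)) = invCount L (K \ N) + high i L :=
      invCount_insert_right _ hiKN
    have hinvN : invCount N (insert i (K \ N)) = invCount N (K \ N) + high i N :=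
      invCount_insert_right _ hiKN
    have hPMc : low i Mᶜ + high i Mᶜ = Mᶜ.card := by
      rw [low_add_high, Finset.erase_eq_of_notMem hiMc]
    rw [e1, e2, hlow1, hlow2, hmul, hch, hmn, hinvA, hinvB, hinvL, hinvN]
    omega
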